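/- Let α > 0, μ < 0, p > 2. There exists s > 0 with (α/2) s² (log s² − 1) + (μ/p) s^p > 0 if and only if μ > −(αp/(p−2))·e^{−p/2}. -/

import Mathlib

/-- For `α > 0`, `μ < 0`, `p > 2`: there exists `s > 0` with
`(α/2)s²(log s² − 1) + (μ/p)s^p > 0` iff `μ > −(αp/(p−2))·e^(−p/2)`. -/
theorem stmt_9 (α μ p : ℝ) (hα : 0 < α) (hμ : μ < 0) (hp : 2 < p) :
    (∃ s : ℝ, 0 < s ∧
        0 < α / 2 * s ^ 2 * (Real.log (s ^ 2) - 1) + μ / p * s ^ p) ↔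
      -(α * p / (p - 2)) * Real.exp (-p / 2) < μ := by
  have hp0 : (0:ℝ) < p := by linarith
  have hp2 : (0:ℝ) < p - 2 := by linarith
  have hp2' : p - 2 ≠ 0 := ne_of_gt hp2
  have hp0' : p ≠ 0 := ne_of_gt hp0
  have hμ0 : μ ≠ 0 := ne_of_lt hμ
  have hc : 0 < -μ := by linarith
  set A : ℝ := α * p / (-μ * (p - 2)) with hA_def
  have hA : 0 < A := by positivity
  have hE : 0 < Real.exp (p/2) := Real.exp_pos _
  have hexp : Real.exp (-p / 2) = (Real.exp (p/2))⁻¹ := by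
    rw [← Real.exp_neg]; ring_nf
  -- RHS equivalence
  have hiff : (-(α * p / (p - 2)) * Real.exp (-p / 2) < μ) ↔ Real.exp (p/2) < A := by
    rw [hexp, hA_def, neg_mul, ← div_eq_mul_inv, div_div, neg_lt,
      lt_div_iff₀ (by positivity : (0:ℝ) < (p - 2) * Real.exp (p/2)),
      lt_div_iff₀ (by positivity : (0:ℝ) < -μ * (p - 2))]
    constructor <;> intro h <;> nlinarith [h]
  -- splitting lemma
  have hsplit : ∀ s : ℝ, 0 < s →
      α / 2 * s ^ 2 * (Real.log (s ^ 2) - 1) + μ / p * s ^ p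
        = s ^ 2 * (α * Real.log s - α / 2 + μ / p * s ^ (p - 2)) := by
    intro s hs
    have h1 : Real.log (s ^ 2) = 2 * Real.log s := by
      rw [Real.log_pow]; push_cast; ring
    have h2 : s ^ p = s ^ 2 * s ^ (p - 2) := by
      rw [← Real.rpow_natCast s 2, ← Real.rpow_add hs]
      norm_num
    rw [h1, h2]; ring
  rw [hiff]
  constructor
  · rintro ⟨s, hs, hGs⟩
    rw [hsplit s hs] at hGs
    have hsp : 0 < s ^ (p - 2) := Real.rpow_pos_of_pos hs _
    have hX : 0 < α * Real.log s - α / 2 + μ / p * s ^ (p - 2) := by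
      by_contra hX
      push_neg at hX
      nlinarith [pow_pos hs 2, mul_nonpos_of_nonneg_of_nonpos (le_of_lt (pow_pos hs 2)) hX]
    set u : ℝ := s ^ (p - 2) / A with hu_def
    have hu : 0 < u := div_pos hsp hA
    have hlogu : Real.log u ≤ u - 1 := Real.log_le_sub_one_of_pos hu
    have hlogu' : (p - 2) * Real.log s - Real.log A ≤ u - 1 := by
      rw [hu_def, Real.log_div (ne_of_gt hsp) (ne_of_gt hA), Real.log_rpow hs] at hlogu
      rw [hu_def]
      exact hlogu
    have hkey : μ / p * s ^ (p - 2) = -(α / (p - 2)) * u := by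
      rw [hu_def, hA_def]; field_simp
    rw [hkey] at hX
    -- multiply hlogu' by α
    have hmul : α * ((p - 2) * Real.log s - Real.log A) ≤ α * (u - 1) :=
      mul_le_mul_of_nonneg_left hlogu' hα.le
    have hau : -(α / (p - 2)) * u * (p - 2) = -(α * u) := by field_simp
    -- want: log A > p/2
    have hL : p / 2 < Real.log A := by
      by_contra hL
      push_neg at hL
      nlinarith [mul_lt_mul_of_pos_right hX hp2, hmul, hau]
    calc Real.exp (p/2) < Real.exp (Real.log A) := Real.exp_lt_exp.mpr hL
      _ = A := Real.exp_log hA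
  · intro h
    have hL : p / 2 < Real.log A := by
      have := Real.log_lt_log hE h
      rwa [Real.log_exp] at this
    set s₀ : ℝ := A ^ (p - 2)⁻¹ with hs₀_def
    have hs0 : 0 < s₀ := Real.rpow_pos_of_pos hA _
    have hs0p : s₀ ^ (p - 2) = A := by
      rw [hs₀_def, ← Real.rpow_mul hA.le, inv_mul_cancel₀ hp2', Real.rpow_one]
    have hlogs0 : Real.log s₀ = (p - 2)⁻¹ * Real.log A := Real.log_rpow hA _
    have hμA : μ / p * A = -(α / (p - 2)) := by
      rw [hA_def]; field_simp
    refine ⟨s₀, hs0, ?_⟩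
    rw [hsplit s₀ hs0, hs0p, hμA, hlogs0]
    have hfac : α * ((p - 2)⁻¹ * Real.log A) - α / 2 + -(α / (p - 2))
        = α / (p - 2) * (Real.log A - p / 2) := by
      field_simp; ring
    rw [hfac]
    exact mul_pos (pow_pos hs0 2) (mul_pos (div_pos hα hp2) (sub_pos.mpr hL))
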